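/- Let A₀, t > 0 and 0 < q ≤ 1, Ω > 0, and set ϖ := (1+q²)·t/(4q·Ω). Let h_g be a random variable with density f_{h_g}(x) = (ϖ/A₀)·(x/A₀)^{((1+q²)ϖ/(2q))−1}·I₀(−((1−q²)ϖ/(2q))·ln(x/A₀)) on (0, A₀] (and 0 otherwise), and let h_a be independent of h_g with log-normal density f_{h_a}(h) = (1/(√(8πσ²)·h))·exp(−(ln h + 2σ²)²/(8σ²)) for h > 0, where σ > 0. Let η, h_p, γ̄, γ_thr > 0 and define h := η·h_p·h_g·h_a. Then the outage probability satisfies P( h²·γ̄ ≤ γ_thr ) = (ϖ/2)·∫₀¹ x^{((1+q²)ϖ/(2q))−1} · I₀(−((1−q²)ϖ/(2q))·ln x) · [ 1 − erf( (0.5·ln(γ̄/γ_thr) + ln(η·h_p·A₀·x) − 2σ²)/√(8σ²) ) ] dx. -/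

import Mathlib

open Real MeasureTheory ProbabilityTheory intervalIntegral

/-- The Gauss error function `erf x = (2/√π) ∫₀ˣ exp (−t²) dt`. -/
noncomputable def erf (x : ℝ) : ℝ :=
  (2 / Real.sqrt π) * ∫ t in (0:ℝ)..x, Real.exp (-t ^ 2)

/-- Modified Bessel function of the first kind of order zero:
`I₀(x) = (1/π) ∫₀^π exp(x cos τ) dτ`. -/
noncomputable def besselI0 (x : ℝ) : ℝ :=
  (1 / π) * ∫ τ in (0:ℝ)..π, Real.exp (x * Real.cos τ)

open Set
open scoped ENNReal

section Aux

lemma gauss_integrable : Integrable (fun t : ℝ => Real.exp (-t ^ 2)) := by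
  simpa using integrable_exp_neg_mul_sq (b := 1) one_pos

lemma gauss_Iic_zero : (∫ t in Iic (0:ℝ), Real.exp (-t ^ 2)) = Real.sqrt π / 2 := by
  have h1 := integral_comp_neg_Ioi (0:ℝ) (fun t => Real.exp (-t ^ 2))
  have h2 : (∫ t in Ioi (0:ℝ), Real.exp (-1 * t ^ 2)) = Real.sqrt (π / 1) / 2 :=
    integral_gaussian_Ioi 1
  simp only [neg_sq, neg_zero] at h1
  simp only [neg_one_mul, div_one] at h2
  rw [← h1, h2]

/-- The standard (√2-rescaled) Gaussian cumulative function. -/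
noncomputable def gcdf (w : ℝ) : ℝ := (Real.sqrt π)⁻¹ * ∫ t in Iic w, Real.exp (-t ^ 2)

lemma gcdf_nonneg (w : ℝ) : 0 ≤ gcdf w :=
  mul_nonneg (inv_nonneg.2 (Real.sqrt_nonneg _))
    (setIntegral_nonneg measurableSet_Iic fun _ _ => (Real.exp_pos _).le)

lemma gcdf_eq (w : ℝ) : gcdf w = (1 + erf w) / 2 := by
  have h := integral_Iic_sub_Iic (f := fun t : ℝ => Real.exp (-t ^ 2)) (μ := volume)
    (a := 0) (b := w) gauss_integrable.integrableOn gauss_integrable.integrableOn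
  rw [gauss_Iic_zero] at h
  have hIic : (∫ t in Iic w, Real.exp (-t ^ 2))
      = Real.sqrt π / 2 + ∫ t in (0:ℝ)..w, Real.exp (-t ^ 2) := by linarith
  have hπ : Real.sqrt π ≠ 0 := by positivity
  rw [gcdf, erf, hIic]
  field_simp

lemma erf_neg (x : ℝ) : erf (-x) = - erf x := by
  have h := intervalIntegral.integral_comp_neg (a := (0:ℝ)) (b := x)
    (f := fun t : ℝ => Real.exp (-t ^ 2))
  simp only [neg_sq, neg_zero] at h
  rw [erf, erf, intervalIntegral.integral_symm (-x) 0] at *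
  rw [← h]
  ring

lemma gcdf_neg (w : ℝ) : gcdf (-w) = (1 - erf w) / 2 := by
  rw [gcdf_eq, erf_neg]; ring

lemma setIntegral_Iic_add (f : ℝ → ℝ) (L m : ℝ) :
    (∫ v in Iic L, f (v + m)) = ∫ v in Iic (L + m), f v := by
  rw [← MeasureTheory.integral_indicator measurableSet_Iic, ← MeasureTheory.integral_indicator measurableSet_Iic]
  have hind : (Iic L).indicator (fun v => f (v + m)) = fun v => (Iic (L + m)).indicator f (v + m) := by
    funext v
    by_cases h : v ≤ L
    · rw [indicator_of_mem (mem_Iic.2 h), indicator_of_mem (mem_Iic.2 (by linarith))]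
    · rw [indicator_of_notMem (fun hh => h (mem_Iic.1 hh)),
        indicator_of_notMem (fun hh => h (by linarith [mem_Iic.1 hh]))]
  rw [hind]
  exact integral_add_right_eq_self (fun v => (Iic (L + m)).indicator f v) m

lemma setIntegral_Iic_div (f : ℝ → ℝ) (w s : ℝ) (hs : 0 < s) :
    (∫ v in Iic (s * w), f (v / s)) = s * ∫ t in Iic w, f t := by
  rw [← MeasureTheory.integral_indicator measurableSet_Iic, ← MeasureTheory.integral_indicator measurableSet_Iic]
  have hind : (Iic (s * w)).indicator (fun v => f (v / s)) = fun v => (Iic w).indicator f (v / s) := by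
    funext v
    by_cases h : v ≤ s * w
    · rw [indicator_of_mem (mem_Iic.2 h),
        indicator_of_mem (mem_Iic.2 (by rw [div_le_iff₀ hs]; linarith [mul_comm s w]))]
    · rw [indicator_of_notMem (fun hh => h (mem_Iic.1 hh))]
      rw [indicator_of_notMem]
      intro hh
      have := mem_Iic.1 hh
      rw [div_le_iff₀ hs] at this
      exact h (by linarith [mul_comm w s])
  rw [hind, MeasureTheory.Measure.integral_comp_div ((Iic w).indicator f) s, abs_of_pos hs,
    smul_eq_mul]

lemma exp_image_Iic (L : ℝ) : Real.exp '' Iic L = Ioc 0 (Real.exp L) := by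
  ext y
  constructor
  · rintro ⟨v, hv, rfl⟩
    exact ⟨Real.exp_pos v, Real.exp_le_exp.2 hv⟩
  · rintro ⟨hy1, hy2⟩
    exact ⟨Real.log y, mem_Iic.2 ((Real.log_le_iff_le_exp hy1).2 hy2), Real.exp_log hy1⟩

lemma key_fun (σ : ℝ) (hσ : 0 < σ) (v : ℝ) :
    |Real.exp v| • ((1 / (Real.sqrt (8 * π * σ ^ 2) * Real.exp v)) *
        Real.exp (-(Real.log (Real.exp v) + 2 * σ ^ 2) ^ 2 / (8 * σ ^ 2)))
      = (Real.sqrt (8 * π * σ ^ 2))⁻¹ * Real.exp (-(v + 2 * σ ^ 2) ^ 2 / (8 * σ ^ 2)) := by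
  have h1 : Real.exp v ≠ 0 := (Real.exp_pos v).ne'
  have hC : Real.sqrt (8 * π * σ ^ 2) ≠ 0 := by positivity
  rw [abs_of_pos (Real.exp_pos v), Real.log_exp, smul_eq_mul]
  field_simp

lemma gauss_shift_integrable (σ : ℝ) (hσ : 0 < σ) :
    Integrable (fun v : ℝ =>
      (Real.sqrt (8 * π * σ ^ 2))⁻¹ * Real.exp (-(v + 2 * σ ^ 2) ^ 2 / (8 * σ ^ 2))) := by
  have hb : (0:ℝ) < (8 * σ ^ 2)⁻¹ := by positivity
  have h0 : Integrable (fun v : ℝ => Real.exp (-(8 * σ ^ 2)⁻¹ * v ^ 2)) :=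
    integrable_exp_neg_mul_sq hb
  have h1 := h0.comp_add_right (2 * σ ^ 2)
  have h2 : (fun v : ℝ => Real.exp (-(8 * σ ^ 2)⁻¹ * (v + 2 * σ ^ 2) ^ 2))
      = fun v : ℝ => Real.exp (-(v + 2 * σ ^ 2) ^ 2 / (8 * σ ^ 2)) := by
    funext v; congr 1; ring
  exact (h2 ▸ h1).const_mul _

lemma lognormal_integrableOn (σ : ℝ) (hσ : 0 < σ) (u : ℝ) (hu : 0 < u) :
    IntegrableOn (fun y : ℝ => (1 / (Real.sqrt (8 * π * σ ^ 2) * y)) *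
      Real.exp (-(Real.log y + 2 * σ ^ 2) ^ 2 / (8 * σ ^ 2))) (Ioc 0 u) := by
  have hL : Ioc (0:ℝ) u = Real.exp '' Iic (Real.log u) := by
    rw [exp_image_Iic, Real.exp_log hu]
  rw [hL, integrableOn_image_iff_integrableOn_abs_deriv_smul measurableSet_Iic
      (fun v _ => (Real.hasDerivAt_exp v).hasDerivWithinAt) Real.exp_injective.injOn]
  simp_rw [key_fun σ hσ]
  exact (gauss_shift_integrable σ hσ).integrableOn

lemma lognormal_cdf (σ : ℝ) (hσ : 0 < σ) (u : ℝ) (hu : 0 < u) :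
    (∫ y in Ioc 0 u, (1 / (Real.sqrt (8 * π * σ ^ 2) * y)) *
        Real.exp (-(Real.log y + 2 * σ ^ 2) ^ 2 / (8 * σ ^ 2)))
      = gcdf ((Real.log u + 2 * σ ^ 2) / Real.sqrt (8 * σ ^ 2)) := by
  have hL : Ioc (0:ℝ) u = Real.exp '' Iic (Real.log u) := by
    rw [exp_image_Iic, Real.exp_log hu]
  rw [hL, integral_image_eq_integral_abs_deriv_smul measurableSet_Iic
      (fun v _ => (Real.hasDerivAt_exp v).hasDerivWithinAt) Real.exp_injective.injOn]
  simp_rw [key_fun σ hσ]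
  rw [MeasureTheory.integral_const_mul]
  have hshift : (∫ v in Iic (Real.log u), Real.exp (-(v + 2 * σ ^ 2) ^ 2 / (8 * σ ^ 2)))
      = ∫ v in Iic (Real.log u + 2 * σ ^ 2), Real.exp (-v ^ 2 / (8 * σ ^ 2)) :=
    setIntegral_Iic_add (fun v => Real.exp (-v ^ 2 / (8 * σ ^ 2))) _ _
  rw [hshift]
  have hs2 : (0:ℝ) < Real.sqrt (8 * σ ^ 2) := Real.sqrt_pos.2 (by positivity)
  have hsq : (Real.sqrt (8 * σ ^ 2)) ^ 2 = 8 * σ ^ 2 := Real.sq_sqrt (by positivity)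
  have hdiv : (fun v : ℝ => Real.exp (-v ^ 2 / (8 * σ ^ 2)))
      = fun v : ℝ => Real.exp (-(v / Real.sqrt (8 * σ ^ 2)) ^ 2) := by
    funext v; congr 1
    rw [div_pow, hsq]; ring
  have hLw : Real.log u + 2 * σ ^ 2
      = Real.sqrt (8 * σ ^ 2) * ((Real.log u + 2 * σ ^ 2) / Real.sqrt (8 * σ ^ 2)) := by
    field_simp
  rw [hdiv, hLw, setIntegral_Iic_div (fun t => Real.exp (-t ^ 2)) _ _ hs2]
  have hCC : Real.sqrt (8 * π * σ ^ 2) = Real.sqrt π * Real.sqrt (8 * σ ^ 2) := by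
    rw [← Real.sqrt_mul pi_pos.le]; congr 1; ring
  rw [gcdf, hCC, mul_inv]
  have hπ : Real.sqrt π ≠ 0 := by positivity
  field_simp

lemma lintegral_eq_of_support_subset {f : ℝ → ℝ≥0∞} {T : Set ℝ} (hT : MeasurableSet T)
    (h : ∀ x ∉ T, f x = 0) : (∫⁻ x, f x) = ∫⁻ x in T, f x := by
  rw [← lintegral_indicator hT f]
  apply lintegral_congr
  intro x
  by_cases hx : x ∈ T
  · rw [indicator_of_mem hx]
  · rw [indicator_of_notMem hx, h x hx]

lemma setLIntegral_congr_sets {f : ℝ → ℝ≥0∞} {S S' : Set ℝ} (hS : MeasurableSet S)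
    (hS' : MeasurableSet S') (h : ∀ y, S.indicator f y = S'.indicator f y) :
    (∫⁻ y in S, f y) = ∫⁻ y in S', f y := by
  rw [← lintegral_indicator hS f, ← lintegral_indicator hS' f]
  exact lintegral_congr h

lemma measurable_rpow_const (c : ℝ) : Measurable fun x : ℝ => x ^ c := by measurability

lemma besselI0_continuous : Continuous besselI0 := by
  have hc : Continuous (Function.uncurry fun (x τ : ℝ) => Real.exp (x * Real.cos τ)) := by
    fun_prop
  unfold besselI0
  exact continuous_const.mul
    (intervalIntegral.continuous_parametric_intervalIntegral_of_continuous' hc 0 π)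

lemma besselI0_nonneg (x : ℝ) : 0 ≤ besselI0 x :=
  mul_nonneg (by positivity)
    (intervalIntegral.integral_nonneg pi_pos.le fun τ _ => (Real.exp_pos _).le)

end Aux

/-- Eq. (38): outage probability of the IRS-assisted FSO link under log-normal turbulence:
for the composite channel `h = η h_p h_g h_a` with `h_g` having the GML density of Eq. (32)
and `h_a` independent log-normal fading,
`P(h² γ̄ ≤ γ_thr) = (ϖ/2) ∫₀¹ x^{(1+q²)ϖ/(2q)−1} I₀(−((1−q²)ϖ/(2q)) ln x)
  [1 − erf((0.5 ln(γ̄/γ_thr) + ln(η h_p A₀ x) − 2σ²)/√(8σ²))] dx`. -/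
theorem outage_probability_lognormal {Ω : Type*} [MeasurableSpace Ω]
    (P : Measure Ω) [IsProbabilityMeasure P]
    (A₀ t q Ωm σ η hp γb γthr ϖ : ℝ)
    (hA₀ : 0 < A₀) (ht : 0 < t) (hq : 0 < q) (hq1 : q ≤ 1) (hΩm : 0 < Ωm) (hσ : 0 < σ)
    (hη : 0 < η) (hhp : 0 < hp) (hγb : 0 < γb) (hγthr : 0 < γthr)
    (hϖ : ϖ = (1 + q ^ 2) * t / (4 * q * Ωm))
    (hg ha : Ω → ℝ) (hmhg : Measurable hg) (hmha : Measurable ha)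
    (hlawg : Measure.map hg P = volume.withDensity (fun x => ENNReal.ofReal (
        if 0 < x ∧ x ≤ A₀ then
          (ϖ / A₀) * (x / A₀) ^ ((1 + q ^ 2) * ϖ / (2 * q) - 1) *
            besselI0 (-((1 - q ^ 2) * ϖ / (2 * q)) * Real.log (x / A₀))
        else 0)))
    (hlawa : Measure.map ha P = volume.withDensity (fun x => ENNReal.ofReal (
        if 0 < x then
          (1 / (Real.sqrt (8 * π * σ ^ 2) * x)) *
            Real.exp (-(Real.log x + 2 * σ ^ 2) ^ 2 / (8 * σ ^ 2))
        else 0)))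
    (hindep : IndepFun hg ha P) :
    (P {ω | (η * hp * hg ω * ha ω) ^ 2 * γb ≤ γthr}).toReal
      = (ϖ / 2) * ∫ x in (0:ℝ)..1,
          x ^ ((1 + q ^ 2) * ϖ / (2 * q) - 1) *
            besselI0 (-((1 - q ^ 2) * ϖ / (2 * q)) * Real.log x) *
            (1 - erf ((0.5 * Real.log (γb / γthr) + Real.log (η * hp * A₀ * x) - 2 * σ ^ 2)
              / Real.sqrt (8 * σ ^ 2))) := by
  have hϖpos : 0 < ϖ := by rw [hϖ]; positivity
  have hA₀' : A₀ ≠ 0 := hA₀.ne'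
  set e : ℝ := (1 + q ^ 2) * ϖ / (2 * q) - 1 with he
  set β : ℝ := (1 - q ^ 2) * ϖ / (2 * q) with hβ
  have hD : (0:ℝ) < Real.sqrt (γthr / γb) := Real.sqrt_pos.2 (div_pos hγthr hγb)
  set fgE : ℝ → ℝ := fun x => (ϖ / A₀) * (x / A₀) ^ e * besselI0 (-β * Real.log (x / A₀))
    with hfgE
  set faE : ℝ → ℝ := fun y => (1 / (Real.sqrt (8 * π * σ ^ 2) * y)) *
    Real.exp (-(Real.log y + 2 * σ ^ 2) ^ 2 / (8 * σ ^ 2)) with hfaE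
  set Fg : ℝ → ℝ≥0∞ := fun x => ENNReal.ofReal (if 0 < x ∧ x ≤ A₀ then fgE x else 0) with hFg
  set Fa : ℝ → ℝ≥0∞ := fun y => ENNReal.ofReal (if 0 < y then faE y else 0) with hFa
  -- continuity and positivity of besselI0
  have hbessel_cont : Continuous besselI0 := besselI0_continuous
  have hbessel_nonneg : ∀ x, 0 ≤ besselI0 x := besselI0_nonneg
  have hfgE_nonneg : ∀ x : ℝ, 0 < x → 0 ≤ fgE x := by
    intro x hx
    exact mul_nonneg (mul_nonneg (by positivity) (Real.rpow_nonneg (by positivity) _))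
      (hbessel_nonneg _)
  -- measurability
  have hm_fgE : Measurable fgE := by
    have h1 : Measurable fun x : ℝ => (x / A₀) ^ e :=
      (measurable_rpow_const e).comp (measurable_id.div_const A₀)
    have h2 : Measurable fun x : ℝ => besselI0 (-β * Real.log (x / A₀)) :=
      hbessel_cont.measurable.comp
        ((Real.measurable_log.comp (measurable_id.div_const A₀)).const_mul (-β))
    exact (measurable_const.mul h1).mul h2
  have hm_Fg : Measurable Fg := by
    refine ENNReal.measurable_ofReal.comp (Measurable.ite ?_ hm_fgE measurable_const)
    exact measurableSet_Ioc (a := (0:ℝ)) (b := A₀)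
  have hm_faE : Measurable faE := by
    have h1 : Measurable fun y : ℝ => 1 / (Real.sqrt (8 * π * σ ^ 2) * y) :=
      measurable_const.div (measurable_id.const_mul _)
    have h2 : Measurable fun y : ℝ =>
        Real.exp (-(Real.log y + 2 * σ ^ 2) ^ 2 / (8 * σ ^ 2)) :=
      Real.measurable_exp.comp
        ((((Real.measurable_log.add_const _).pow_const 2).neg).div_const _)
    exact h1.mul h2
  have hm_Fa : Measurable Fa :=
    ENNReal.measurable_ofReal.comp (Measurable.ite measurableSet_Ioi hm_faE measurable_const)
  -- gcdf is monotone, hence measurable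
  have hgcdf_mono : Monotone gcdf := by
    intro w w' hw
    unfold gcdf
    refine mul_le_mul_of_nonneg_left ?_ (inv_nonneg.2 (Real.sqrt_nonneg _))
    exact setIntegral_mono_set gauss_integrable.integrableOn
      (Filter.Eventually.of_forall fun t => (Real.exp_pos _).le)
      (HasSubset.Subset.eventuallyLE (Iic_subset_Iic.2 hw))
  have hgcdf_meas : Measurable gcdf := hgcdf_mono.measurable
  -- the event as a set of pairs
  set S : Set (ℝ × ℝ) := {p : ℝ × ℝ | (η * hp * p.1 * p.2) ^ 2 * γb ≤ γthr} with hSdef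
  have hS : MeasurableSet S := by
    refine measurableSet_le ?_ measurable_const
    exact (((measurable_fst.const_mul (η * hp)).mul measurable_snd).pow_const 2).mul_const γb
  have hmap : P.map (fun ω => (hg ω, ha ω)) = (volume.withDensity Fg).prod (volume.withDensity Fa) := by
    rw [← hlawg, ← hlawa]
    exact (indepFun_iff_map_prod_eq_prod_map_map hmhg.aemeasurable hmha.aemeasurable).1 hindep
  have hPE : P {ω | (η * hp * hg ω * ha ω) ^ 2 * γb ≤ γthr}
      = ((volume.withDensity Fg).prod (volume.withDensity Fa)) S := by
    rw [← hmap, Measure.map_apply (hmhg.prodMk hmha) hS]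
    rfl
  haveI hprob : IsProbabilityMeasure (volume.withDensity Fa : Measure ℝ) := by
    rw [← hlawa]; exact Measure.isProbabilityMeasure_map hmha.aemeasurable
  have hprod : ((volume.withDensity Fg).prod (volume.withDensity Fa)) S
      = ∫⁻ x, Fg x * (volume.withDensity Fa) (Prod.mk x ⁻¹' S) := by
    rw [Measure.prod_apply hS,
      lintegral_withDensity_eq_lintegral_mul volume hm_Fg (measurable_measure_prodMk_left hS)]
    simp only [Pi.mul_apply]
  set w : ℝ → ℝ := fun x =>
    (Real.log (Real.sqrt (γthr / γb) / (η * hp * x)) + 2 * σ ^ 2) / Real.sqrt (8 * σ ^ 2) with hw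
  -- inner (log-normal CDF) computation
  have hinner : ∀ x : ℝ, 0 < x →
      (volume.withDensity Fa) (Prod.mk x ⁻¹' S) = ENNReal.ofReal (gcdf (w x)) := by
    intro x hx
    have hcx : 0 < η * hp * x := by positivity
    have hr : 0 < Real.sqrt (γthr / γb) / (η * hp * x) := div_pos hD hcx
    have hpre : MeasurableSet (Prod.mk x ⁻¹' S) := hS.preimage measurable_prodMk_left
    rw [withDensity_apply _ hpre]
    have hsets : ∀ y : ℝ, (Prod.mk x ⁻¹' S).indicator Fa y
        = (Ioc 0 (Real.sqrt (γthr / γb) / (η * hp * x))).indicator Fa y := by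
      intro y
      by_cases hy : 0 < y
      · have hiff : (η * hp * x * y) ^ 2 * γb ≤ γthr ↔
            y ≤ Real.sqrt (γthr / γb) / (η * hp * x) := by
          rw [le_div_iff₀ hcx, show y * (η * hp * x) = η * hp * x * y from by ring,
            Real.le_sqrt (by positivity) (by positivity), le_div_iff₀ hγb]
        by_cases hcond : (η * hp * x * y) ^ 2 * γb ≤ γthr
        · have hmem1 : y ∈ Prod.mk x ⁻¹' S := hcond
          have hmem2 : y ∈ Ioc 0 (Real.sqrt (γthr / γb) / (η * hp * x)) := ⟨hy, hiff.1 hcond⟩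
          rw [indicator_of_mem hmem1, indicator_of_mem hmem2]
        · have h1 : y ∉ Prod.mk x ⁻¹' S := hcond
          have h2 : y ∉ Ioc 0 (Real.sqrt (γthr / γb) / (η * hp * x)) :=
            fun hmem => hcond (hiff.2 hmem.2)
          rw [indicator_of_notMem h1, indicator_of_notMem h2]
      · have hFa0 : Fa y = 0 := by
          rw [hFa]; simp [hy]
        simp only [indicator_apply]
        split_ifs <;> simp [hFa0]
    rw [setLIntegral_congr_sets hpre measurableSet_Ioc hsets]
    have hstep : (∫⁻ y in Ioc 0 (Real.sqrt (γthr / γb) / (η * hp * x)), Fa y)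
        = ∫⁻ y in Ioc 0 (Real.sqrt (γthr / γb) / (η * hp * x)), ENNReal.ofReal (faE y) := by
      refine setLIntegral_congr_fun measurableSet_Ioc ?_
      intro y hy
      rw [hFa]
      simp only
      rw [if_pos hy.1]
    rw [hstep]
    have hnn : 0 ≤ᵐ[volume.restrict (Ioc 0 (Real.sqrt (γthr / γb) / (η * hp * x)))] faE := by
      refine (ae_restrict_iff' measurableSet_Ioc).2 (Filter.Eventually.of_forall ?_)
      intro y hy
      have h0 : (0:ℝ) ≤ 1 / (Real.sqrt (8 * π * σ ^ 2) * y) :=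
        div_nonneg zero_le_one (mul_nonneg (Real.sqrt_nonneg _) hy.1.le)
      exact mul_nonneg h0 (Real.exp_pos _).le
    rw [← ofReal_integral_eq_lintegral_ofReal (lognormal_integrableOn σ hσ _ hr) hnn,
      lognormal_cdf σ hσ _ hr]
  -- assemble
  rw [hPE, hprod]
  have houter : (∫⁻ x, Fg x * (volume.withDensity Fa) (Prod.mk x ⁻¹' S))
      = ∫⁻ x in Ioc 0 A₀, Fg x * (volume.withDensity Fa) (Prod.mk x ⁻¹' S) := by
    refine lintegral_eq_of_support_subset measurableSet_Ioc ?_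
    intro x hx
    have hxc : ¬(0 < x ∧ x ≤ A₀) := by simpa [mem_Ioc] using hx
    rw [hFg]
    simp [hxc]
  rw [houter]
  have hpoint : (∫⁻ x in Ioc 0 A₀, Fg x * (volume.withDensity Fa) (Prod.mk x ⁻¹' S))
      = ∫⁻ x in Ioc 0 A₀, ENNReal.ofReal (fgE x * gcdf (w x)) := by
    refine setLIntegral_congr_fun measurableSet_Ioc ?_
    intro x hx
    beta_reduce
    rw [hinner x hx.1, hFg]
    simp only
    rw [if_pos (mem_Ioc.1 hx), ← ENNReal.ofReal_mul (hfgE_nonneg x hx.1)]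
  rw [hpoint]
  have hmw : Measurable w := by
    have h1 : Measurable fun x : ℝ => Real.sqrt (γthr / γb) / (η * hp * x) :=
      measurable_const.div (measurable_id.const_mul _)
    exact ((Real.measurable_log.comp h1).add_const _).div_const _
  have hfinal1 : (∫⁻ x in Ioc 0 A₀, ENNReal.ofReal (fgE x * gcdf (w x))).toReal
      = ∫ x in Ioc 0 A₀, fgE x * gcdf (w x) := by
    rw [integral_eq_lintegral_of_nonneg_ae]
    · refine (ae_restrict_iff' measurableSet_Ioc).2 (Filter.Eventually.of_forall ?_)
      exact fun x hx => mul_nonneg (hfgE_nonneg x hx.1) (gcdf_nonneg _)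
    · exact (hm_fgE.mul (hgcdf_meas.comp hmw)).aestronglyMeasurable
  rw [hfinal1]
  -- change of variables x ↦ A₀ x and simplification of the integrand
  rw [← intervalIntegral.integral_of_le hA₀.le]
  have hsubst : (∫ x in (0:ℝ)..A₀, fgE x * gcdf (w x))
      = A₀ • ∫ x in (0:ℝ)..1, fgE (A₀ * x) * gcdf (w (A₀ * x)) := by
    have h := intervalIntegral.smul_integral_comp_mul_left (a := (0:ℝ)) (b := 1)
      (fun x => fgE x * gcdf (w x)) A₀
    simpa using h.symm
  rw [hsubst, intervalIntegral.integral_of_le zero_le_one]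
  have hcongr : (∫ x in Ioc (0:ℝ) 1, fgE (A₀ * x) * gcdf (w (A₀ * x)))
      = ∫ x in Ioc (0:ℝ) 1, (ϖ / (2 * A₀)) *
          (x ^ e * besselI0 (-β * Real.log x) *
            (1 - erf ((0.5 * Real.log (γb / γthr) + Real.log (η * hp * A₀ * x) - 2 * σ ^ 2)
              / Real.sqrt (8 * σ ^ 2)))) := by
    refine setIntegral_congr_fun measurableSet_Ioc ?_
    intro x hx
    have hx0 : 0 < x := hx.1
    have hAx : A₀ * x / A₀ = x := by
      field_simp
    have harg : w (A₀ * x) = -((0.5 * Real.log (γb / γthr) + Real.log (η * hp * A₀ * x)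
        - 2 * σ ^ 2) / Real.sqrt (8 * σ ^ 2)) := by
      rw [hw]
      simp only
      have h1 : η * hp * (A₀ * x) = η * hp * A₀ * x := by ring
      rw [h1, Real.log_div hD.ne' (by positivity), Real.log_sqrt (div_pos hγthr hγb).le,
        Real.log_div hγthr.ne' hγb.ne', Real.log_div hγb.ne' hγthr.ne']
      ring
    rw [hfgE]
    simp only
    rw [hAx, harg, gcdf_neg]
    ring
  rw [hcongr, MeasureTheory.integral_const_mul, ← intervalIntegral.integral_of_le zero_le_one,
    smul_eq_mul, ← mul_assoc]
  congr 1
  field_simp
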